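/- There exists an absolute constant c for which the following holds. Let X be a normed space, let 𝒰 ⊂ X be a finite set of cardinality N, and let A > 0. Assume that for every positive integer L and every tuple (u₁,…,u_L) ∈ 𝒰^L, E_ε ‖Σ_{j=1}^L ε_j u_j‖_X ≤ A√L, where (ε_j)_{j=1}^L is a Rademacher vector. Then for every u > 0, log N(conv(𝒰), ‖·‖_X, u) ≤ c (A/u)² log N. -/

import Mathlib

open MeasureTheory ProbabilityTheory Set Pointwise

noncomputable section

namespace Paper

/-- Euclidean (ℓ₂) norm of a finitely-indexed complex vector. -/
def euclNorm {ι : Type*} [Fintype ι] (x : ι → ℂ) : ℝ :=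
  Real.sqrt (∑ i, ‖x i‖ ^ 2)

/-- Operator norm ‖A‖₂→₂ of a complex matrix. -/
def opNorm {ι κ : Type*} [Fintype ι] [Fintype κ] (A : Matrix ι κ ℂ) : ℝ :=
  ⨆ x : {x : κ → ℂ // euclNorm x ≤ 1}, euclNorm (A.mulVec x)

/-- Frobenius norm of a complex matrix. -/
def frobNorm {ι κ : Type*} [Fintype ι] [Fintype κ] (A : Matrix ι κ ℂ) : ℝ :=
  Real.sqrt (∑ i, ∑ j, ‖A i j‖ ^ 2)

/-- Radius of a set of matrices in the Frobenius norm. -/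
def dF {ι κ : Type*} [Fintype ι] [Fintype κ] (𝒜 : Set (Matrix ι κ ℂ)) : ℝ :=
  sSup (frobNorm '' 𝒜)

/-- Radius of a set of matrices in the operator norm. -/
def dOp {ι κ : Type*} [Fintype ι] [Fintype κ] (𝒜 : Set (Matrix ι κ ℂ)) : ℝ :=
  sSup (opNorm '' 𝒜)

/-- Distance (with respect to a distance function `d`) from a point to a set. -/
def setDist {X : Type*} (d : X → X → ℝ) (x : X) (S : Set X) : ℝ :=
  sInf (d x '' S)

/-- Talagrand's γ₂-functional of a set `T` with respect to a distance function `d`: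
the infimum over admissible sequences `𝒯` of `sup_{t ∈ T} ∑_r 2^{r/2} d(t, 𝒯 r)`. -/
def gamma2 {X : Type*} (d : X → X → ℝ) (T : Set X) : ℝ :=
  sInf { c : ℝ | ∃ 𝒯 : ℕ → Set X, (∀ r, 𝒯 r ⊆ T) ∧ (∀ r, (𝒯 r).Finite) ∧
    (𝒯 0).ncard = 1 ∧ (∀ r, (𝒯 r).ncard ≤ 2 ^ 2 ^ r) ∧
    c = ⨆ t ∈ T, ∑' r : ℕ, (2 : ℝ) ^ ((r : ℝ) / 2) * setDist d t (𝒯 r) }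

/-- γ₂-functional of a set of matrices with respect to the operator norm. -/
def gamma2Op {ι κ : Type*} [Fintype ι] [Fintype κ] (𝒜 : Set (Matrix ι κ ℂ)) : ℝ :=
  gamma2 (fun A B => opNorm (A - B)) 𝒜

/-- Restricted isometry constant of order `s`: the smallest `δ ≥ 0` such that
`(1-δ)‖x‖₂² ≤ ‖Φx‖₂² ≤ (1+δ)‖x‖₂²` for all `s`-sparse `x`. -/
def ripConst {ι κ : Type*} [Fintype ι] [Fintype κ] (s : ℕ) (Φ : Matrix ι κ ℂ) : ℝ :=
  sInf {δ : ℝ | 0 ≤ δ ∧ ∀ x : κ → ℂ, {j | x j ≠ 0}.ncard ≤ s →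
    (1 - δ) * euclNorm x ^ 2 ≤ euclNorm (Φ.mulVec x) ^ 2 ∧
    euclNorm (Φ.mulVec x) ^ 2 ≤ (1 + δ) * euclNorm x ^ 2}

/-- A Rademacher vector: independent coordinates, each uniform on {−1, 1}. -/
def IsRademacher {Ωp : Type*} [MeasurableSpace Ωp] (μ : Measure Ωp) {ι : Type*}
    (ε : Ωp → ι → ℝ) : Prop :=
  (∀ i, Measurable fun ω => ε ω i) ∧
  iIndepFun (fun i ω => ε ω i) μ ∧
  ∀ i, μ.map (fun ω => ε ω i) =
    (2⁻¹ : ENNReal) • Measure.dirac (1 : ℝ) + (2⁻¹ : ENNReal) • Measure.dirac (-1 : ℝ)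

/-- A standard Gaussian vector: independent standard normal coordinates. -/
def IsStdGaussian {Ωp : Type*} [MeasurableSpace Ωp] (μ : Measure Ωp) {ι : Type*}
    (g : Ωp → ι → ℝ) : Prop :=
  (∀ i, Measurable fun ω => g ω i) ∧
  iIndepFun (fun i ω => g ω i) μ ∧
  ∀ i, μ.map (fun ω => g ω i) = gaussianReal 0 1

/-- A random vector whose entries are independent, mean-zero, variance-one,
`L`-subgaussian real random variables. -/
def HasSubgaussianEntries {Ωp : Type*} [MeasurableSpace Ωp] (μ : Measure Ωp) {ι : Type*}
    (L : ℝ) (ξ : Ωp → ι → ℝ) : Prop :=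
  (∀ i, Measurable fun ω => ξ ω i) ∧
  iIndepFun (fun i ω => ξ ω i) μ ∧
  (∀ i, ∫ ω, ξ ω i ∂μ = 0) ∧
  (∀ i, ∫ ω, (ξ ω i) ^ 2 ∂μ = 1) ∧
  ∀ i, ∀ t : ℝ, 0 < t →
    μ {ω | t ≤ |ξ ω i|} ≤ ENNReal.ofReal (2 * Real.exp (-(t ^ 2) / (2 * L ^ 2)))

/-- The standard inner product on a finitely-indexed complex coordinate space. -/
def cInner {ι : Type*} [Fintype ι] (x y : ι → ℂ) : ℂ :=
  ∑ i, starRingEnd ℂ (x i) * y i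

/-- An isotropic `L`-subgaussian random vector on ℂⁿ. -/
def IsIsotropicSubgaussian {Ωp : Type*} [MeasurableSpace Ωp] (μ : Measure Ωp) {ι : Type*}
    [Fintype ι] (L : ℝ) (ξ : Ωp → ι → ℂ) : Prop :=
  Measurable ξ ∧
  (∫ ω, ξ ω ∂μ = 0) ∧
  (∀ θ : ι → ℂ, euclNorm θ = 1 → ∫ ω, ‖cInner (ξ ω) θ‖ ^ 2 ∂μ = 1) ∧
  ∀ θ : ι → ℂ, euclNorm θ = 1 → ∀ t : ℝ, 0 < t →
    μ {ω | t ≤ ‖cInner (ξ ω) θ‖} ≤ ENNReal.ofReal (2 * Real.exp (-(t ^ 2) / (2 * L ^ 2)))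

/-- `ξ'` is an independent copy of `ξ`. -/
def IsIndepCopy {Ωp : Type*} [MeasurableSpace Ωp] (μ : Measure Ωp) {E : Type*}
    [MeasurableSpace E] (ξ ξ' : Ωp → E) : Prop :=
  IndepFun ξ ξ' μ ∧ μ.map ξ' = μ.map ξ

/-- The partial circulant matrix `Φ x = m^{-1/2} R_Ω (ξ * x)` generated by `ξ` with
sampling set `Ω` of cardinality `m`. -/
def partialCirculant {n m : ℕ} (Ω : Finset (Fin n)) (hΩ : Ω.card = m) (ξ : Fin n → ℝ) :
    Matrix (Fin m) (Fin n) ℂ :=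
  Matrix.of fun i k =>
    (((Real.sqrt m)⁻¹ * ξ (((Ω.orderIsoOfFin hΩ i : Ω) : Fin n) - k) : ℝ) : ℂ)

/-- The time-frequency shift `π(k, ℓ) = Mˡ Tᵏ` on ℂᵐ, as an `m × m` matrix. -/
def tfShift (m : ℕ) (k l : Fin m) : Matrix (Fin m) (Fin m) ℂ :=
  Matrix.of fun j j' =>
    if j' = j - k then Complex.exp (2 * Real.pi * Complex.I * (l : ℕ) * (j : ℕ) / m) else 0

/-- The Gabor synthesis matrix generated by `h ∈ ℂᵐ`, whose column indexed by
`λ = (k, ℓ) ∈ ℤ_m²` is `π(λ) h`. -/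
def gaborMatrix {m : ℕ} (h : Fin m → ℂ) : Matrix (Fin m) (Fin m × Fin m) ℂ :=
  Matrix.of fun j lam =>
    Complex.exp (2 * Real.pi * Complex.I * (lam.2 : ℕ) * (j : ℕ) / m) * h (j - lam.1)

/-- `V_x = m^{-1/2} ∑_λ x_λ π(λ)`. -/
def gaborV {m : ℕ} (x : Fin m × Fin m → ℂ) : Matrix (Fin m) (Fin m) ℂ :=
  (((Real.sqrt m)⁻¹ : ℝ) : ℂ) • ∑ lam : Fin m × Fin m, x lam • tfShift m lam.1 lam.2

/-- Covering number: the minimal cardinality of a set of centers of open balls of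
radius `u` (w.r.t. the distance function `d`) covering `S`. -/
def coveringNumber {X : Type*} (d : X → X → ℝ) (S : Set X) (u : ℝ) : ℕ :=
  sInf {k : ℕ | ∃ C : Finset X, C.card = k ∧ ∀ x ∈ S, ∃ c ∈ C, d x c < u}

/-- auxiliary -/
lemma sum_fun_split {ι M : Type*} [Fintype ι] [AddCommMonoid M] {L : ℕ} (j : Fin L)
    (F : (Fin L → ι) → M) :
    ∑ g : Fin L → ι, F g = ∑ a : ι, ∑ h : {k : Fin L // k ≠ j} → ι,
      F (fun k => if hk : k = j then a else h ⟨k, hk⟩) := by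
  rw [← Equiv.sum_comp (Equiv.funSplitAt j ι).symm F, Fintype.sum_prod_type]
  refine Finset.sum_congr rfl fun a _ => Finset.sum_congr rfl fun h _ => ?_
  congr 1
  funext k
  by_cases hk : k = j
  · subst hk; simp [Equiv.funSplitAt, Equiv.piSplitAt]
  · simp [Equiv.funSplitAt, Equiv.piSplitAt, hk]

lemma sumW {ι : Type*} [Fintype ι] (L : ℕ) (q : ι → ℝ) (hq : ∑ i, q i = 1) :
    ∑ f : Fin L → ι, ∏ j, q (f j) = 1 := by
  rw [← Fintype.sum_pow q L, hq, one_pow]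

lemma marginal {ι : Type*} [Fintype ι] {E : Type*} [AddCommGroup E] [Module ℝ E]
    {L : ℕ} (q : ι → ℝ) (hq : ∑ i, q i = 1) (φ : ι → E) (j : Fin L) :
    ∑ g : Fin L → ι, (∏ k, q (g k)) • φ (g j) = ∑ i, q i • φ i := by
  classical
  rw [sum_fun_split j]
  refine Finset.sum_congr rfl fun a _ => ?_
  have key : ∀ h : {k : Fin L // k ≠ j} → ι,
      (∏ k, q (if hk : k = j then a else h ⟨k, hk⟩)) = q a * ∏ k : {k : Fin L // k ≠ j}, q (h k) := by
    intro h
    rw [← Finset.mul_prod_erase Finset.univ _ (Finset.mem_univ j)]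
    simp only [dif_pos rfl]
    congr 1
    rw [Finset.prod_subtype (p := fun k => k ≠ j) (Finset.univ.erase j) (fun k => by simp)
      (fun k => q (if hk : k = j then a else h ⟨k, hk⟩))]
    exact Finset.prod_congr rfl fun k _ => by rw [dif_neg k.2]
  simp only [dif_pos, key]
  rw [← Finset.sum_smul]
  congr 1
  rw [← Finset.mul_sum, ← Fintype.prod_sum (fun (_ : {k : Fin L // k ≠ j}) i => q i)]
  simp [hq]

lemma maurey_approx {X : Type*} [NormedAddCommGroup X] [NormedSpace ℝ X]
    (𝒰 : Finset X) (A : ℝ)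
    (hyp : ∀ L : ℕ, 0 < L → ∀ u : Fin L → X, (∀ j, u j ∈ 𝒰) →
      ((2 : ℝ) ^ L)⁻¹ * ∑ σ : Fin L → Bool, ‖∑ j, (if σ j then (1 : ℝ) else -1) • u j‖ ≤
        A * Real.sqrt L)
    (L : ℕ) (hL : 0 < L) (x : X) (hx : x ∈ convexHull ℝ (𝒰 : Set X)) :
    ∃ f : Fin L → {y // y ∈ 𝒰}, ‖x - (L : ℝ)⁻¹ • ∑ j, (f j : X)‖ ≤ 2 * A / Real.sqrt L := by
  classical
  set ι := {y // y ∈ 𝒰}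
  -- extract weights
  rw [Finset.convexHull_eq] at hx
  obtain ⟨w, hw0, hw1, hwx⟩ := hx
  rw [Finset.centerMass_eq_of_sum_1 _ _ hw1] at hwx
  set q : ι → ℝ := fun v => w v with hqdef
  have hq0 : ∀ v : ι, 0 ≤ q v := fun v => hw0 v v.2
  have hq1 : ∑ v : ι, q v = 1 := by
    rw [← hw1]; exact Finset.sum_coe_sort 𝒰 w
  have hqx : ∑ v : ι, q v • (v : X) = x := by
    rw [← hwx]
    exact Finset.sum_coe_sort 𝒰 (fun y => w y • id y)
  set φ : ι → X := fun v => (v : X)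
  set W : (Fin L → ι) → ℝ := fun f => ∏ j, q (f j) with hWdef
  have hW0 : ∀ f, 0 ≤ W f := fun f => Finset.prod_nonneg fun j _ => hq0 _
  have hW1 : ∑ f : Fin L → ι, W f = 1 := sumW L q hq1
  -- Jensen step
  have marg : ∀ j : Fin L, ∑ g : Fin L → ι, W g • φ (g j) = x := by
    intro j; rw [marginal q hq1 φ j, hqx]
  have hLx : ∑ g : Fin L → ι, W g • (∑ j, φ (g j)) = (L : ℝ) • x := by
    simp_rw [Finset.smul_sum]
    rw [Finset.sum_comm]
    simp_rw [marg]
    rw [Finset.sum_const, Finset.card_univ, Fintype.card_fin, Nat.cast_smul_eq_nsmul]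
  have jensen : ∀ f : Fin L → ι, ‖(∑ j, φ (f j)) - (L : ℝ) • x‖ ≤
      ∑ g : Fin L → ι, W g * ‖∑ j, (φ (f j) - φ (g j))‖ := by
    intro f
    have hrw : (∑ j, φ (f j)) - (L : ℝ) • x =
        ∑ g : Fin L → ι, W g • (∑ j, (φ (f j) - φ (g j))) := by
      simp_rw [Finset.sum_sub_distrib, smul_sub]
      rw [Finset.sum_sub_distrib, ← Finset.sum_smul, hW1, one_smul, hLx]
    rw [hrw]
    refine (norm_sum_le _ _).trans (le_of_eq (Finset.sum_congr rfl fun g _ => ?_))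
    rw [norm_smul, Real.norm_of_nonneg (hW0 g)]
  set T : ℝ := ∑ p : (Fin L → ι) × (Fin L → ι),
      (W p.1 * W p.2) * ‖∑ j, (φ (p.1 j) - φ (p.2 j))‖ with hT
  have hST : ∑ f : Fin L → ι, W f * ‖(∑ j, φ (f j)) - (L : ℝ) • x‖ ≤ T := by
    rw [hT, Fintype.sum_prod_type]
    refine Finset.sum_le_sum fun f _ => ?_
    calc W f * ‖(∑ j, φ (f j)) - (L : ℝ) • x‖
        ≤ W f * ∑ g : Fin L → ι, W g * ‖∑ j, (φ (f j) - φ (g j))‖ :=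
          mul_le_mul_of_nonneg_left (jensen f) (hW0 f)
      _ = ∑ g : Fin L → ι, (W f * W g) * ‖∑ j, (φ (f j) - φ (g j))‖ := by
          rw [Finset.mul_sum]; exact Finset.sum_congr rfl fun g _ => (mul_assoc _ _ _).symm
  have swap : ∀ σ : Fin L → Bool, T = ∑ p : (Fin L → ι) × (Fin L → ι), (W p.1 * W p.2) *
      ‖∑ j, (if σ j then (1 : ℝ) else -1) • (φ (p.1 j) - φ (p.2 j))‖ := by
    intro σ
    have hm : Function.Involutive (fun p : (Fin L → ι) × (Fin L → ι) =>
        ((fun j => if σ j then p.1 j else p.2 j), (fun j => if σ j then p.2 j else p.1 j))) := by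
      intro p
      refine Prod.ext (funext fun j => ?_) (funext fun j => ?_) <;>
        by_cases h : σ j <;> simp [h]
    rw [hT, ← Equiv.sum_comp hm.toPerm
      (fun p : (Fin L → ι) × (Fin L → ι) => (W p.1 * W p.2) * ‖∑ j, (φ (p.1 j) - φ (p.2 j))‖)]
    refine Finset.sum_congr rfl fun p _ => ?_
    show (W _ * W _) * _ = _
    congr 1
    · show (∏ j, q (if σ j then p.1 j else p.2 j)) * (∏ j, q (if σ j then p.2 j else p.1 j)) =
        (∏ j, q (p.1 j)) * (∏ j, q (p.2 j))
      rw [← Finset.prod_mul_distrib, ← Finset.prod_mul_distrib]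
      exact Finset.prod_congr rfl fun j _ => by by_cases h : σ j <;> simp [h, mul_comm]
    · congr 1
      exact Finset.sum_congr rfl fun j _ => by
        by_cases h : σ j <;> simp [h, neg_sub]
  have card_sigma : (Fintype.card (Fin L → Bool) : ℝ) = 2 ^ L := by
    simp [Fintype.card_fun]
  have avg : T = ((2 : ℝ) ^ L)⁻¹ * ∑ σ : Fin L → Bool,
      ∑ p : (Fin L → ι) × (Fin L → ι), (W p.1 * W p.2) *
        ‖∑ j, (if σ j then (1 : ℝ) else -1) • (φ (p.1 j) - φ (p.2 j))‖ := by
    rw [Finset.sum_congr rfl fun σ _ => (swap σ).symm, Finset.sum_const, Finset.card_univ,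
      nsmul_eq_mul, card_sigma, inv_mul_cancel_left₀ (by positivity)]
  have factor1 : ∀ F : (Fin L → ι) → ℝ,
      ∑ p : (Fin L → ι) × (Fin L → ι), (W p.1 * W p.2) * F p.1 = ∑ f : Fin L → ι, W f * F f := by
    intro F
    rw [Fintype.sum_prod_type]
    refine Finset.sum_congr rfl fun f _ => ?_
    calc ∑ g : Fin L → ι, (W f * W g) * F f = ∑ g : Fin L → ι, W g * (W f * F f) :=
          Finset.sum_congr rfl fun g _ => by ring
      _ = (∑ g : Fin L → ι, W g) * (W f * F f) := (Finset.sum_mul _ _ _).symm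
      _ = W f * F f := by rw [hW1, one_mul]
  have factor2 : ∀ F : (Fin L → ι) → ℝ,
      ∑ p : (Fin L → ι) × (Fin L → ι), (W p.1 * W p.2) * F p.2 = ∑ f : Fin L → ι, W f * F f := by
    intro F
    rw [Fintype.sum_prod_type]
    calc ∑ f : Fin L → ι, ∑ g : Fin L → ι, (W f * W g) * F g
        = ∑ f : Fin L → ι, W f * ∑ g : Fin L → ι, W g * F g := by
          refine Finset.sum_congr rfl fun f _ => ?_
          rw [Finset.mul_sum]
          exact Finset.sum_congr rfl fun g _ => by ring
      _ = (∑ f : Fin L → ι, W f) * ∑ g : Fin L → ι, W g * F g := (Finset.sum_mul _ _ _).symm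
      _ = ∑ g : Fin L → ι, W g * F g := by rw [hW1, one_mul]
  have hTbound : T ≤ 2 * (A * Real.sqrt L) := by
    rw [avg]
    have step : ∀ σ : Fin L → Bool,
        ∑ p : (Fin L → ι) × (Fin L → ι), (W p.1 * W p.2) *
          ‖∑ j, (if σ j then (1 : ℝ) else -1) • (φ (p.1 j) - φ (p.2 j))‖ ≤
        2 * ∑ f : Fin L → ι, W f * ‖∑ j, (if σ j then (1 : ℝ) else -1) • φ (f j)‖ := by
      intro σ
      have hle : ∀ p : (Fin L → ι) × (Fin L → ι),
          (W p.1 * W p.2) * ‖∑ j, (if σ j then (1 : ℝ) else -1) • (φ (p.1 j) - φ (p.2 j))‖ ≤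
          (W p.1 * W p.2) * ‖∑ j, (if σ j then (1 : ℝ) else -1) • φ (p.1 j)‖ +
          (W p.1 * W p.2) * ‖∑ j, (if σ j then (1 : ℝ) else -1) • φ (p.2 j)‖ := by
        intro p
        rw [← mul_add]
        refine mul_le_mul_of_nonneg_left ?_ (mul_nonneg (hW0 _) (hW0 _))
        simp_rw [smul_sub, Finset.sum_sub_distrib]
        exact norm_sub_le _ _
      calc ∑ p : (Fin L → ι) × (Fin L → ι), (W p.1 * W p.2) *
            ‖∑ j, (if σ j then (1 : ℝ) else -1) • (φ (p.1 j) - φ (p.2 j))‖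
          ≤ ∑ p : (Fin L → ι) × (Fin L → ι),
            ((W p.1 * W p.2) * ‖∑ j, (if σ j then (1 : ℝ) else -1) • φ (p.1 j)‖ +
             (W p.1 * W p.2) * ‖∑ j, (if σ j then (1 : ℝ) else -1) • φ (p.2 j)‖) :=
            Finset.sum_le_sum fun p _ => hle p
        _ = 2 * ∑ f : Fin L → ι, W f * ‖∑ j, (if σ j then (1 : ℝ) else -1) • φ (f j)‖ := by
            rw [Finset.sum_add_distrib,
              factor1 (fun f => ‖∑ j, (if σ j then (1 : ℝ) else -1) • φ (f j)‖),
              factor2 (fun f => ‖∑ j, (if σ j then (1 : ℝ) else -1) • φ (f j)‖)]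
            ring
    calc ((2 : ℝ) ^ L)⁻¹ * ∑ σ : Fin L → Bool,
          ∑ p : (Fin L → ι) × (Fin L → ι), (W p.1 * W p.2) *
            ‖∑ j, (if σ j then (1 : ℝ) else -1) • (φ (p.1 j) - φ (p.2 j))‖
        ≤ ((2 : ℝ) ^ L)⁻¹ * ∑ σ : Fin L → Bool,
            2 * ∑ f : Fin L → ι, W f * ‖∑ j, (if σ j then (1 : ℝ) else -1) • φ (f j)‖ := by
          refine mul_le_mul_of_nonneg_left (Finset.sum_le_sum fun σ _ => step σ) (by positivity)
      _ = ((2 : ℝ) ^ L)⁻¹ * (2 * ∑ f : Fin L → ι, W f *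
            ∑ σ : Fin L → Bool, ‖∑ j, (if σ j then (1 : ℝ) else -1) • φ (f j)‖) := by
          rw [← Finset.mul_sum, Finset.sum_comm]
          exact congrArg _ (congrArg _ (Finset.sum_congr rfl fun f _ =>
            (Finset.mul_sum _ _ _).symm))
      _ ≤ ((2 : ℝ) ^ L)⁻¹ * (2 * ∑ f : Fin L → ι, W f * ((2 : ℝ) ^ L * (A * Real.sqrt L))) := by
          have hSf : ∀ f : Fin L → ι,
              ∑ σ : Fin L → Bool, ‖∑ j, (if σ j then (1 : ℝ) else -1) • φ (f j)‖ ≤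
                (2 : ℝ) ^ L * (A * Real.sqrt L) := by
            intro f
            have h := hyp L hL (fun j => φ (f j)) (fun j => (f j).2)
            calc ∑ σ : Fin L → Bool, ‖∑ j, (if σ j then (1 : ℝ) else -1) • φ (f j)‖
                = (2 : ℝ) ^ L * (((2 : ℝ) ^ L)⁻¹ *
                    ∑ σ : Fin L → Bool, ‖∑ j, (if σ j then (1 : ℝ) else -1) • φ (f j)‖) := by
                  rw [mul_inv_cancel_left₀ (by positivity)]
              _ ≤ (2 : ℝ) ^ L * (A * Real.sqrt L) :=
                  mul_le_mul_of_nonneg_left h (by positivity)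
          refine mul_le_mul_of_nonneg_left (mul_le_mul_of_nonneg_left
            (Finset.sum_le_sum fun f _ => mul_le_mul_of_nonneg_left (hSf f) (hW0 f))
            (by norm_num)) (by positivity)
      _ = 2 * (A * Real.sqrt L) := by
          rw [← Finset.sum_mul, hW1, one_mul]
          field_simp
  have exists_f : ∃ f : Fin L → ι, ‖(∑ j, φ (f j)) - (L : ℝ) • x‖ ≤ 2 * (A * Real.sqrt L) := by
    by_contra hcon
    push_neg at hcon
    have hne : ∃ f0 : Fin L → ι, 0 < W f0 := by
      by_contra hz
      push_neg at hz
      have h0 : ∑ f : Fin L → ι, W f = 0 :=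
        Finset.sum_eq_zero fun f _ => le_antisymm (hz f) (hW0 f)
      rw [hW1] at h0; norm_num at h0
    obtain ⟨f0, hf0⟩ := hne
    have hlt : ∑ f : Fin L → ι, W f * (2 * (A * Real.sqrt L)) <
        ∑ f : Fin L → ι, W f * ‖(∑ j, φ (f j)) - (L : ℝ) • x‖ :=
      Finset.sum_lt_sum (fun f _ => mul_le_mul_of_nonneg_left (hcon f).le (hW0 f))
        ⟨f0, Finset.mem_univ f0, (mul_lt_mul_iff_right₀ hf0).2 (hcon f0)⟩
    rw [← Finset.sum_mul, hW1, one_mul] at hlt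
    exact absurd (hlt.trans_le (hST.trans hTbound)) (lt_irrefl _)
  obtain ⟨f, hf⟩ := exists_f
  refine ⟨f, ?_⟩
  have hL0 : (0 : ℝ) < L := by exact_mod_cast hL
  have hrw2 : x - (L : ℝ)⁻¹ • ∑ j, ((f j : X)) =
      -((L : ℝ)⁻¹ • ((∑ j, φ (f j)) - (L : ℝ) • x)) := by
    rw [smul_sub, smul_smul, inv_mul_cancel₀ hL0.ne', one_smul, neg_sub]
  rw [hrw2, norm_neg, norm_smul, Real.norm_of_nonneg (inv_nonneg.2 hL0.le)]
  have hs : Real.sqrt L > 0 := Real.sqrt_pos.2 hL0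
  calc (L : ℝ)⁻¹ * ‖(∑ j, φ (f j)) - (L : ℝ) • x‖ ≤ (L : ℝ)⁻¹ * (2 * (A * Real.sqrt L)) :=
        mul_le_mul_of_nonneg_left hf (inv_nonneg.2 hL0.le)
    _ = 2 * A / Real.sqrt L := by
        rw [eq_div_iff hs.ne']
        field_simp
        linear_combination A * Real.mul_self_sqrt hL0.le


/-- Lemma 4.2 (Maurey): covering number bound for convex hulls. -/
theorem maurey_covering :
    ∃ c : ℝ, 0 < c ∧
      ∀ (X : Type) [NormedAddCommGroup X] [NormedSpace ℝ X]
        (𝒰 : Finset X) (N : ℕ) (A : ℝ), 𝒰.card = N →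
      (∀ L : ℕ, 0 < L → ∀ u : Fin L → X, (∀ j, u j ∈ 𝒰) →
        ((2 : ℝ) ^ L)⁻¹ * ∑ σ : Fin L → Bool, ‖∑ j, (if σ j then (1 : ℝ) else -1) • u j‖ ≤
          A * Real.sqrt L) →
      ∀ u : ℝ, 0 < u →
        Real.log (coveringNumber (fun a b => ‖a - b‖)
            (convexHull ℝ (𝒰 : Set X)) u) ≤
          c * (A / u) ^ 2 * Real.log N := by
  classical
  refine ⟨8, by norm_num, ?_⟩
  intro X _ _ 𝒰 N A hcard hyp u hu
  by_cases hNE : 𝒰.Nonempty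
  swap
  · have h𝒰 : 𝒰 = ∅ := Finset.not_nonempty_iff_eq_empty.1 hNE
    have hc : coveringNumber (fun a b => ‖a - b‖) (convexHull ℝ (𝒰 : Set X)) u = 0 := by
      refine Nat.sInf_eq_zero.2 (Or.inl ⟨∅, rfl, fun x hx => ?_⟩)
      rw [h𝒰] at hx
      simp at hx
    rw [hc]
    have hN : N = 0 := by rw [← hcard, h𝒰]; rfl
    rw [hN]
    simp
  obtain ⟨v0, hv0⟩ := hNE
  have hN1 : 1 ≤ N := by rw [← hcard]; exact Finset.card_pos.2 ⟨v0, hv0⟩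
  have hlogN : 0 ≤ Real.log N := Real.log_natCast_nonneg N
  have hnorm : ∀ v ∈ 𝒰, ‖v‖ ≤ A := by
    intro v hv
    have h := hyp 1 one_pos (fun _ => v) (fun _ => hv)
    have he : ∀ σ : Fin 1 → Bool, ‖∑ j : Fin 1, (if σ j then (1 : ℝ) else -1) • v‖ = ‖v‖ := by
      intro σ
      rw [Fin.sum_univ_one]
      by_cases hσ : σ 0 <;> simp [hσ, norm_smul]
    rw [Finset.sum_congr rfl (fun σ _ => he σ), Finset.sum_const, Finset.card_univ] at h
    simp [Fintype.card_fun] at h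
    linarith
  have hA0 : 0 ≤ A := (norm_nonneg v0).trans (hnorm v0 hv0)
  by_cases hu2 : 2 * A < u
  · have hsub : convexHull ℝ (𝒰 : Set X) ⊆ Metric.closedBall v0 (2 * A) := by
      refine convexHull_min (fun y hy => ?_) (convex_closedBall _ _)
      rw [Metric.mem_closedBall, dist_eq_norm]
      calc ‖y - v0‖ ≤ ‖y‖ + ‖v0‖ := norm_sub_le _ _
        _ ≤ A + A := add_le_add (hnorm y hy) (hnorm v0 hv0)
        _ = 2 * A := by ring
    have hle1 : coveringNumber (fun a b => ‖a - b‖) (convexHull ℝ (𝒰 : Set X)) u ≤ 1 := by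
      refine Nat.sInf_le ⟨{v0}, Finset.card_singleton v0, fun x hx =>
        ⟨v0, Finset.mem_singleton_self v0, ?_⟩⟩
      have h := hsub hx
      rw [Metric.mem_closedBall, dist_eq_norm] at h
      exact lt_of_le_of_lt h hu2
    have hlog0 : Real.log (coveringNumber (fun a b => ‖a - b‖)
        (convexHull ℝ (𝒰 : Set X)) u) ≤ 0 := by
      rcases Nat.le_one_iff_eq_zero_or_eq_one.1 hle1 with h | h <;> rw [h] <;> simp
    exact hlog0.trans (by positivity)
  · push_neg at hu2
    have hA : 0 < A := by linarith
    set r : ℝ := (2 * A / u) ^ 2 with hr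
    have hr1 : 1 ≤ r := by
      have h1 : 1 ≤ 2 * A / u := (one_le_div hu).2 hu2
      nlinarith
    set L : ℕ := ⌊r⌋₊ + 1 with hLdef
    have hLpos : 0 < L := Nat.succ_pos _
    have hLcast : (L : ℝ) = (⌊r⌋₊ : ℝ) + 1 := by push_cast [hLdef]; ring
    have hrL : r < L := by rw [hLcast]; exact Nat.lt_floor_add_one r
    have hLle : (L : ℝ) ≤ 2 * r := by
      have h1 : (⌊r⌋₊ : ℝ) ≤ r := Nat.floor_le (by positivity)
      rw [hLcast]; linarith
    set C : Finset X :=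
      Finset.image (fun f : Fin L → {y // y ∈ 𝒰} => (L : ℝ)⁻¹ • ∑ j, ((f j : X)))
        Finset.univ with hC
    have hcover : ∀ x ∈ convexHull ℝ (𝒰 : Set X), ∃ c ∈ C, ‖x - c‖ < u := by
      intro x hx
      obtain ⟨f, hf⟩ := maurey_approx 𝒰 A hyp L hLpos x hx
      refine ⟨_, Finset.mem_image_of_mem _ (Finset.mem_univ f), lt_of_le_of_lt hf ?_⟩
      rw [div_lt_iff₀ (Real.sqrt_pos.2 (by exact_mod_cast hLpos))]
      have h2 : 2 * A / u < Real.sqrt L := by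
        rw [Real.lt_sqrt (by positivity)]
        exact hrL
      calc 2 * A = (2 * A / u) * u := by field_simp
        _ < Real.sqrt L * u := mul_lt_mul_of_pos_right h2 hu
        _ = u * Real.sqrt L := mul_comm _ _
    have hcovle : coveringNumber (fun a b => ‖a - b‖) (convexHull ℝ (𝒰 : Set X)) u ≤ C.card :=
      Nat.sInf_le ⟨C, rfl, hcover⟩
    have hcard2 : C.card ≤ N ^ L := by
      calc C.card ≤ (Finset.univ : Finset (Fin L → {y // y ∈ 𝒰})).card := Finset.card_image_le
        _ = Fintype.card (Fin L → {y // y ∈ 𝒰}) := Finset.card_univ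
        _ = N ^ L := by simp [Fintype.card_fun, Fintype.card_coe, hcard]
    have hfinal : coveringNumber (fun a b => ‖a - b‖) (convexHull ℝ (𝒰 : Set X)) u ≤ N ^ L :=
      hcovle.trans hcard2
    have hlog : Real.log (coveringNumber (fun a b => ‖a - b‖)
        (convexHull ℝ (𝒰 : Set X)) u) ≤ L * Real.log N := by
      rcases Nat.eq_zero_or_pos (coveringNumber (fun a b => ‖a - b‖)
        (convexHull ℝ (𝒰 : Set X)) u) with h0 | hpos
      · rw [h0]; simp; positivity
      · calc Real.log (coveringNumber (fun a b => ‖a - b‖) (convexHull ℝ (𝒰 : Set X)) u)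
            ≤ Real.log ((N : ℝ) ^ L) := by
              refine Real.log_le_log (by exact_mod_cast hpos) ?_
              exact_mod_cast hfinal
          _ = L * Real.log N := Real.log_pow _ _
    refine hlog.trans ?_
    calc (L : ℝ) * Real.log N ≤ (2 * r) * Real.log N :=
          mul_le_mul_of_nonneg_right hLle hlogN
      _ = 8 * (A / u) ^ 2 * Real.log N := by rw [hr]; ring_nf


end Paper
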